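/- Consider the function F(β) = (1/2)‖y − A β‖₂² + λ‖β‖₁ with λ > 0. Suppose x* satisfies the KKT conditions on its support T: A_T^T(y − A x*) = λ sgn(x*_T), x*_{T^c} = 0, and A_{T^c}^T(y − A x*) = λ ε_{T^c} with ‖ε_{T^c}‖_∞ < 1. Then for any direction h ∈ ℝ^N with h_{T^c} ≠ 0 and all sufficiently small t > 0 (small enough that sgn(x*_T + t h_T) = sgn(x*_T)), F(x* + t h) = F(x*) + (t²/2)‖A h‖₂² + λ t (‖h_{T^c}‖₁ − ⟨ε_{T^c}, h_{T^c}⟩) > F(x*). -/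
import Mathlib

private lemma sign_mul_self_eq_abs (u : ℝ) : Real.sign u * u = |u| := by
  rcases lt_trichotomy u 0 with h0 | h0 | h0
  · rw [Real.sign_of_neg h0, abs_of_neg h0]; ring
  · simp [h0]
  · rw [Real.sign_of_pos h0, abs_of_pos h0]; ring

theorem stmt18 {d N : ℕ} (A : Matrix (Fin d) (Fin N) ℝ) (y : Fin d → ℝ)
    (lam : ℝ) (hlam : 0 < lam)
    (T : Finset (Fin N)) (xstar ε : Fin N → ℝ)
    (hsupp : ∀ j ∉ T, xstar j = 0)
    (hKKT_T : ∀ j ∈ T, ∑ i, A i j * (y i - A.mulVec xstar i) = lam * Real.sign (xstar j))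
    (hKKT_Tc : ∀ j ∉ T, ∑ i, A i j * (y i - A.mulVec xstar i) = lam * ε j)
    (hε : ∀ j ∉ T, |ε j| < 1)
    (h : Fin N → ℝ) (hh : ∃ j ∉ T, h j ≠ 0)
    (t : ℝ) (ht : 0 < t)
    (hsgn : ∀ j ∈ T, Real.sign (xstar j + t * h j) = Real.sign (xstar j)) :
    ((1/2) * ∑ i, (y i - A.mulVec (xstar + t • h) i)^2 + lam * ∑ j, |(xstar + t • h) j| =
      (1/2) * ∑ i, (y i - A.mulVec xstar i)^2 + lam * ∑ j, |xstar j|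
        + (t^2/2) * ∑ i, (A.mulVec h i)^2
        + lam * t * ((∑ j ∈ Tᶜ, |h j|) - ∑ j ∈ Tᶜ, ε j * h j)) ∧
    (1/2) * ∑ i, (y i - A.mulVec xstar i)^2 + lam * ∑ j, |xstar j| <
      (1/2) * ∑ i, (y i - A.mulVec (xstar + t • h) i)^2 + lam * ∑ j, |(xstar + t • h) j| := by
  -- inner product swap
  have hswap : ∑ i, (y i - A.mulVec xstar i) * A.mulVec h i
      = ∑ j, (∑ i, A i j * (y i - A.mulVec xstar i)) * h j := by
    simp only [Matrix.mulVec, dotProduct, Finset.mul_sum, Finset.sum_mul]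
    rw [Finset.sum_comm]
    exact Finset.sum_congr rfl fun j _ => Finset.sum_congr rfl fun i _ => by ring
  have hinner : ∑ i, (y i - A.mulVec xstar i) * A.mulVec h i
      = lam * (∑ j ∈ T, Real.sign (xstar j) * h j) + lam * ∑ j ∈ Tᶜ, ε j * h j := by
    rw [hswap, ← Finset.sum_add_sum_compl T, Finset.mul_sum, Finset.mul_sum]
    congr 1
    · exact Finset.sum_congr rfl fun j hj => by rw [hKKT_T j hj]; ring
    · exact Finset.sum_congr rfl fun j hj => by
        rw [hKKT_Tc j (Finset.mem_compl.mp hj)]; ring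
  -- quadratic expansion
  have hquad : ∑ i, (y i - A.mulVec (xstar + t • h) i)^2
      = ∑ i, (y i - A.mulVec xstar i)^2
        - 2*t*(∑ i, (y i - A.mulVec xstar i) * A.mulVec h i)
        + t^2 * ∑ i, (A.mulVec h i)^2 := by
    rw [Finset.mul_sum, Finset.mul_sum, ← Finset.sum_sub_distrib, ← Finset.sum_add_distrib]
    refine Finset.sum_congr rfl fun i _ => ?_
    rw [Matrix.mulVec_add, Matrix.mulVec_smul]
    simp only [Pi.add_apply, Pi.smul_apply, smul_eq_mul]
    ring
  -- l1 expansion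
  have hT1 : ∑ j ∈ T, |(xstar + t • h) j|
      = ∑ j ∈ T, |xstar j| + t * ∑ j ∈ T, Real.sign (xstar j) * h j := by
    rw [Finset.mul_sum, ← Finset.sum_add_distrib]
    refine Finset.sum_congr rfl fun j hj => ?_
    simp only [Pi.add_apply, Pi.smul_apply, smul_eq_mul]
    rw [← sign_mul_self_eq_abs (xstar j + t * h j), hsgn j hj,
        ← sign_mul_self_eq_abs (xstar j)]
    ring
  have hTc1 : ∑ j ∈ Tᶜ, |(xstar + t • h) j| = t * ∑ j ∈ Tᶜ, |h j| := by
    rw [Finset.mul_sum]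
    refine Finset.sum_congr rfl fun j hj => ?_
    simp only [Pi.add_apply, Pi.smul_apply, smul_eq_mul,
      hsupp j (Finset.mem_compl.mp hj), zero_add]
    rw [abs_mul, abs_of_pos ht]
  have hTc0 : ∑ j ∈ Tᶜ, |xstar j| = 0 :=
    Finset.sum_eq_zero fun j hj => by
      rw [hsupp j (Finset.mem_compl.mp hj), abs_zero]
  have hl1 : ∑ j, |(xstar + t • h) j|
      = ∑ j, |xstar j| + t * ∑ j ∈ T, Real.sign (xstar j) * h j
        + t * ∑ j ∈ Tᶜ, |h j| := by
    rw [← Finset.sum_add_sum_compl T (fun j => |(xstar + t • h) j|),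
        ← Finset.sum_add_sum_compl T (fun j => |xstar j|), hT1, hTc1, hTc0]
    ring
  have heq : (1/2) * ∑ i, (y i - A.mulVec (xstar + t • h) i)^2
        + lam * ∑ j, |(xstar + t • h) j| =
      (1/2) * ∑ i, (y i - A.mulVec xstar i)^2 + lam * ∑ j, |xstar j|
        + (t^2/2) * ∑ i, (A.mulVec h i)^2
        + lam * t * ((∑ j ∈ Tᶜ, |h j|) - ∑ j ∈ Tᶜ, ε j * h j) := by
    rw [hquad, hinner, hl1]; ring
  refine ⟨heq, ?_⟩
  rw [heq]
  have hQ : 0 ≤ ∑ i, (A.mulVec h i)^2 :=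
    Finset.sum_nonneg fun i _ => sq_nonneg _
  have hstrict : ∑ j ∈ Tᶜ, ε j * h j < ∑ j ∈ Tᶜ, |h j| := by
    obtain ⟨j0, hj0, hhj0⟩ := hh
    refine Finset.sum_lt_sum (fun j hj => ?_) ⟨j0, Finset.mem_compl.mpr hj0, ?_⟩
    · calc ε j * h j ≤ |ε j * h j| := le_abs_self _
        _ = |ε j| * |h j| := abs_mul _ _
        _ ≤ 1 * |h j| :=
            mul_le_mul_of_nonneg_right (hε j (Finset.mem_compl.mp hj)).le (abs_nonneg _)
        _ = |h j| := one_mul _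
    · calc ε j0 * h j0 ≤ |ε j0| * |h j0| := by rw [← abs_mul]; exact le_abs_self _
        _ < 1 * |h j0| :=
            mul_lt_mul_of_pos_right (hε j0 hj0) (abs_pos.mpr hhj0)
        _ = |h j0| := one_mul _
  have h1 : 0 < lam * t * ((∑ j ∈ Tᶜ, |h j|) - ∑ j ∈ Tᶜ, ε j * h j) :=
    mul_pos (mul_pos hlam ht) (sub_pos.mpr hstrict)
  nlinarith [sq_nonneg t]
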